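/- Let $\Omega\subset\mathbb{R}^d$ be a bounded domain, $q>2$, and suppose $u$ satisfies, for all balls with $B(x,2r)\subset\Omega$ and exponents $q_1<q_2$ with $\frac{1}{q_2}=\frac{1}{q_1}-\frac{2}{d}$, the local estimate $\left(\fint_{B(x,r)}|u|^{q_2}\right)^{1/q_2} \le C\left[\left(\fint_{B(x,2r)}|u|^2\right)^{1/2} + r^2\left(\fint_{B(x,2r)}|F-\lambda u|^{q_1}\right)^{1/q_1}\right]$ together with its $L^\infty$ endpoint. Then by a bootstrap argument, whenever $B(x,2r)\subset\Omega$ and $F\in L^\infty(\Omega)$, $\|u\|_{L^\infty(B(x,r))} \le C(1+r^2|\lambda|)^{d+1}\left[\left(\fint_{B(x,2r)}|u|^2\right)^{1/2} + r^2\|F\|_{L^\infty(\Omega)}\right]$, where $C$ depends only on $d$ and $q$. -/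

import Mathlib

open MeasureTheory Metric Complex

noncomputable section

/-- partial derivative in direction `i`. -/
def pd {n : ℕ} (i : Fin n) (f : EuclideanSpace ℝ (Fin n) → ℂ) (x : EuclideanSpace ℝ (Fin n)) : ℂ :=
  fderiv ℝ f x (EuclideanSpace.single i 1)

/-- Laplacian. -/
def lap {n : ℕ} (f : EuclideanSpace ℝ (Fin n) → ℂ) (x : EuclideanSpace ℝ (Fin n)) : ℂ :=
  ∑ i, pd i (pd i f) x

/-- `L^q` norm over a set. -/
def Lq {n : ℕ} (q : ℝ) (s : Set (EuclideanSpace ℝ (Fin n))) (f : EuclideanSpace ℝ (Fin n) → ℝ) : ℝ :=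
  (eLpNorm f (ENNReal.ofReal q) (volume.restrict s)).toReal

/-- pointwise euclidean norm of a vector field. -/
def vnorm {n d : ℕ} (u : Fin d → EuclideanSpace ℝ (Fin n) → ℂ) (x : EuclideanSpace ℝ (Fin n)) : ℝ :=
  Real.sqrt (∑ i, ‖u i x‖ ^ 2)

/-- pointwise norm of the full gradient of a vector field. -/
def gnorm {n d : ℕ} (u : Fin d → EuclideanSpace ℝ (Fin n) → ℂ) (x : EuclideanSpace ℝ (Fin n)) : ℝ :=
  Real.sqrt (∑ i, ∑ j, ‖pd j (u i) x‖ ^ 2)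

def toE {n : ℕ} (f : Fin n → ℝ) : EuclideanSpace ℝ (Fin n) := (EuclideanSpace.equiv (Fin n) ℝ).symm f

/-- the point `(x', t)` of `ℝ^{d+1}`. -/
def emb {d : ℕ} (x' : EuclideanSpace ℝ (Fin d)) (t : ℝ) : EuclideanSpace ℝ (Fin (d+1)) :=
  toE (Fin.snoc (fun i => x' i) t)

/-- region above the graph of `ψ`. -/
def Hpsi {d : ℕ} (ψ : EuclideanSpace ℝ (Fin d) → ℝ) : Set (EuclideanSpace ℝ (Fin (d+1))) :=
  {z | ψ (toE fun i => z i.castSucc) < z (Fin.last d)}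

/-- surface measure on the graph of `ψ` (pushforward of Lebesgue measure). -/
def smeasure {d : ℕ} (ψ : EuclideanSpace ℝ (Fin d) → ℝ) : Measure (EuclideanSpace ℝ (Fin (d+1))) :=
  Measure.map (fun x' => emb x' (ψ x')) volume

/-- region above a Lipschitz graph, placed at `x₀` in direction `n`. -/
def AboveGraph {d : ℕ} (x₀ n : EuclideanSpace ℝ (Fin d)) (ψ : EuclideanSpace ℝ (Fin d) → ℝ) :
    Set (EuclideanSpace ℝ (Fin d)) :=
  {y | ψ ((y - x₀) - (inner ℝ (y - x₀) n : ℝ) • n) < (inner ℝ (y - x₀) n : ℝ)}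

/-- bounded Lipschitz domain with character `(r₀, M)`. -/
def IsBoundedLipschitzDomainWith {d : ℕ} (r₀ M : ℝ) (Ω : Set (EuclideanSpace ℝ (Fin d))) : Prop :=
  IsOpen Ω ∧ IsConnected Ω ∧ Bornology.IsBounded Ω ∧ 0 < r₀ ∧ 0 ≤ M ∧
    ∀ x ∈ frontier Ω, ∃ (n : EuclideanSpace ℝ (Fin d)) (ψ : EuclideanSpace ℝ (Fin d) → ℝ),
      ‖n‖ = 1 ∧ LipschitzWith (Real.toNNReal M) ψ ∧ ψ 0 = 0 ∧
      Ω ∩ ball x r₀ = AboveGraph x n ψ ∩ ball x r₀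

def IsBoundedLipschitzDomain {d : ℕ} (Ω : Set (EuclideanSpace ℝ (Fin d))) : Prop :=
  ∃ r₀ M : ℝ, IsBoundedLipschitzDomainWith r₀ M Ω

-- helper section to append after the existing defs
section stmt18aux

open MeasureTheory Metric Complex

lemma vnorm_nonneg' {n d : ℕ} (u : Fin d → EuclideanSpace ℝ (Fin n) → ℂ) (x) : 0 ≤ vnorm u x :=
  Real.sqrt_nonneg _

lemma vnorm_eq {n d : ℕ} (u : Fin d → EuclideanSpace ℝ (Fin n) → ℂ) (z) :
    vnorm u z = ‖(WithLp.equiv 2 (Fin d → ℂ)).symm (fun i => u i z)‖ := by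
  rw [EuclideanSpace.norm_eq]
  simp [vnorm]

lemma vnorm_sub_le {n d : ℕ} (F u : Fin d → EuclideanSpace ℝ (Fin n) → ℂ) (lam : ℂ) (z) :
    vnorm (fun i w => F i w - lam * u i w) z ≤ vnorm F z + ‖lam‖ * vnorm u z := by
  rw [vnorm_eq, vnorm_eq, vnorm_eq]
  have h : (WithLp.equiv 2 (Fin d → ℂ)).symm (fun i => F i z - lam * u i z)
      = (WithLp.equiv 2 (Fin d → ℂ)).symm (fun i => F i z)
        - lam • (WithLp.equiv 2 (Fin d → ℂ)).symm (fun i => u i z) := by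
    ext i
    simp [smul_eq_mul]
  rw [h]
  refine (norm_sub_le _ _).trans ?_
  rw [norm_smul]

section avg
variable {α : Type*} [MeasurableSpace α] {μ : Measure α} {s S : Set α} {f : α → ℝ} {c : ℝ}

lemma avg_nonneg' (hs : MeasurableSet s) (h : ∀ z ∈ s, 0 ≤ f z) : 0 ≤ ⨍ z in s, f z ∂μ := by
  rw [setAverage_eq, smul_eq_mul]
  exact mul_nonneg (by positivity) (setIntegral_nonneg hs h)

lemma avg_le_const (hs : MeasurableSet s) (hμs : μ s ≠ ⊤) (hc : 0 ≤ c)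
    (h : ∀ z ∈ s, f z ≤ c) : ⨍ z in s, f z ∂μ ≤ c := by
  by_cases hf : IntegrableOn f s μ
  · rw [setAverage_eq, smul_eq_mul]
    rcases eq_or_ne ((μ s).toReal) 0 with h0 | h0
    · rw [show μ.real s = 0 from h0]; simp [hc]
    · have h1 : ∫ z in s, f z ∂μ ≤ (μ s).toReal * c := by
        have h2 := setIntegral_mono_on hf
          (integrableOn_const hμs) hs h
        rwa [setIntegral_const, smul_eq_mul] at h2
      calc (μ s).toReal⁻¹ * ∫ z in s, f z ∂μ ≤ (μ s).toReal⁻¹ * ((μ s).toReal * c) :=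
            mul_le_mul_of_nonneg_left h1 (by positivity)
        _ = c := by field_simp
  · rw [setAverage_eq, integral_undef hf, smul_zero]; exact hc

lemma avg_mono_set (hS : MeasurableSet S) (hsub : s ⊆ S) (hf : IntegrableOn f S μ)
    (hnn : ∀ z ∈ S, 0 ≤ f z) (h1 : 0 < (μ s).toReal) (h2 : 0 < (μ S).toReal) :
    ⨍ z in s, f z ∂μ ≤ ((μ S).toReal / (μ s).toReal) * ⨍ z in S, f z ∂μ := by
  rw [setAverage_eq, setAverage_eq, smul_eq_mul, smul_eq_mul]
  have hint : ∫ z in s, f z ∂μ ≤ ∫ z in S, f z ∂μ :=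
    setIntegral_mono_set hf ((ae_restrict_iff' hS).2 (ae_of_all _ hnn))
      (HasSubset.Subset.eventuallyLE hsub)
  have heq : ((μ S).toReal / (μ s).toReal) * ((μ S).toReal⁻¹ * ∫ z in S, f z ∂μ)
      = (μ s).toReal⁻¹ * ∫ z in S, f z ∂μ := by
    field_simp
  rw [show μ.real S = (μ S).toReal from rfl, heq]
  exact mul_le_mul_of_nonneg_left hint (by positivity)

end avg

lemma avg_ball_le {d : ℕ} (x y : EuclideanSpace ℝ (Fin d)) {R ρ : ℝ} (hρ : 0 < ρ) (hR : 0 < R)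
    (hsub : ball y ρ ⊆ ball x R) {f : EuclideanSpace ℝ (Fin d) → ℝ}
    (hf : IntegrableOn f (ball x R)) (hnn : ∀ z, 0 ≤ f z) :
    ⨍ z in ball y ρ, f z ≤ (R / ρ) ^ d * ⨍ z in ball x R, f z := by
  have h1 : 0 < (volume (ball y ρ)).toReal :=
    ENNReal.toReal_pos (measure_ball_pos _ _ hρ).ne' measure_ball_lt_top.ne
  have h2 : 0 < (volume (ball x R)).toReal :=
    ENNReal.toReal_pos (measure_ball_pos _ _ hR).ne' measure_ball_lt_top.ne
  have hc : 0 < (volume (ball (0 : EuclideanSpace ℝ (Fin d)) 1)).toReal :=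
    ENNReal.toReal_pos (measure_ball_pos _ _ one_pos).ne' measure_ball_lt_top.ne
  have hratio : (volume (ball x R)).toReal / (volume (ball y ρ)).toReal = (R / ρ) ^ d := by
    rw [Measure.addHaar_ball_of_pos volume x hR, Measure.addHaar_ball_of_pos volume y hρ,
      finrank_euclideanSpace_fin, ENNReal.toReal_mul, ENNReal.toReal_mul,
      ENNReal.toReal_ofReal (by positivity), ENNReal.toReal_ofReal (by positivity), div_pow]
    field_simp
  calc ⨍ z in ball y ρ, f z
      ≤ ((volume (ball x R)).toReal / (volume (ball y ρ)).toReal) * ⨍ z in ball x R, f z :=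
        avg_mono_set measurableSet_ball hsub hf (fun z _ => hnn z) h1 h2
    _ = (R / ρ) ^ d * ⨍ z in ball x R, f z := by rw [hratio]

/-- iterated absorption bound sequence -/
def absG (Ef θf : ℕ → ℝ) (M : ℝ) : ℕ → ℕ → ℝ
  | 0, _ => M
  | (N + 1), k => Ef k + θf k * absG Ef θf M N (k + 1)

end stmt18aux

lemma absG_nonneg (Ef θf : ℕ → ℝ) (M : ℝ) (hM : 0 ≤ M) (hE : ∀ k, 0 ≤ Ef k)
    (hθ : ∀ k, 0 ≤ θf k) : ∀ N k, 0 ≤ absG Ef θf M N k := by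
  intro N
  induction N with
  | zero => intro k; exact hM
  | succ N ih =>
    intro k
    simp only [absG]
    have h1 := ih (k + 1)
    have h2 := hE k
    have h3 := hθ k
    nlinarith

lemma absG_le (Ef θf : ℕ → ℝ) (M P Q A : ℝ) (hM : 0 ≤ M)
    (hE : ∀ k, Ef k ≤ P / 2 * A ^ k + Q / 2) (hθ0 : ∀ k, 0 ≤ θf k)
    (hθA : ∀ k, θf k * A ≤ 1 / 2) (hθ12 : ∀ k, θf k ≤ 1 / 2)
    (hP : 0 ≤ P) (hQ : 0 ≤ Q) (hA0 : 0 < A) :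
    ∀ N k, absG Ef θf M N k ≤ P * A ^ k + Q + (1/2 : ℝ) ^ N * M := by
  intro N
  induction N with
  | zero =>
    intro k
    have h1 : 0 ≤ P * A ^ k := by positivity
    simp only [absG, pow_zero, one_mul]
    linarith
  | succ N ih =>
    intro k
    simp only [absG]
    have hG := ih (k + 1)
    have hGnn : 0 ≤ P * A ^ (k + 1) + Q + (1/2 : ℝ) ^ N * M := by positivity
    have h1 : θf k * absG Ef θf M N (k + 1)
        ≤ θf k * (P * A ^ (k + 1) + Q + (1/2 : ℝ) ^ N * M) := by
      rcases le_or_gt (absG Ef θf M N (k + 1)) (P * A ^ (k + 1) + Q + (1/2 : ℝ) ^ N * M) with h | h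
      · exact mul_le_mul_of_nonneg_left hG (hθ0 k)
      · exact absurd hG (not_le.2 h)
    have e1 : θf k * (P * A ^ (k + 1)) ≤ 1 / 2 * (P * A ^ k) := by
      have h2 : 0 ≤ P * A ^ k := by positivity
      have h3 := mul_le_mul_of_nonneg_right (hθA k) h2
      calc θf k * (P * A ^ (k + 1)) = θf k * A * (P * A ^ k) := by rw [pow_succ]; ring
        _ ≤ 1 / 2 * (P * A ^ k) := h3
    have e2 : θf k * Q ≤ 1 / 2 * Q := mul_le_mul_of_nonneg_right (hθ12 k) hQ
    have e3 : θf k * ((1/2 : ℝ) ^ N * M) ≤ 1 / 2 * ((1/2 : ℝ) ^ N * M) :=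
      mul_le_mul_of_nonneg_right (hθ12 k) (by positivity)
    have h4 : θf k * (P * A ^ (k + 1) + Q + (1/2 : ℝ) ^ N * M)
        = θf k * (P * A ^ (k + 1)) + θf k * Q + θf k * ((1/2 : ℝ) ^ N * M) := by ring
    have h5 := hE k
    have h6 : (1/2 : ℝ) ^ (N + 1) * M = 1 / 2 * ((1/2 : ℝ) ^ N * M) := by rw [pow_succ]; ring
    rw [h6]
    linarith

lemma shell_bound {X : Type*} (S : ℕ → Set X) (v : X → ℝ) (Ef θf : ℕ → ℝ) (M : ℝ)
    (hbase : ∀ k, ∀ z ∈ S k, v z ≤ M)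
    (hGnn : ∀ N k, 0 ≤ absG Ef θf M N k)
    (hstep : ∀ k K, 0 ≤ K → (∀ z ∈ S (k + 1), v z ≤ K) → ∀ z ∈ S k, v z ≤ Ef k + θf k * K) :
    ∀ N k, ∀ z ∈ S k, v z ≤ absG Ef θf M N k := by
  intro N
  induction N with
  | zero => intro k z hz; exact hbase k z hz
  | succ N ih =>
    intro k z hz
    have h := hstep k (absG Ef θf M N (k + 1)) (hGnn N (k + 1))
      (fun w hw => ih (k + 1) w hw) z hz
    simpa [absG] using h

set_option maxHeartbeats 1000000

/-- Local `L²`-to-`L^∞` bound by bootstrapping for the Stokes resolvent.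
Suppose `u` satisfies the interior regularity estimates for the stationary Stokes system
with right-hand side `F - λu` (the `L^{q₁}`-to-`L^{q₂}` improvement with
`1/q₂ = 1/q₁ - 2/d`, together with its `L^∞` endpoint at exponent `q > 2`), on every ball
`B(x,2r) ⊆ Ω`.  Then whenever `B(x,2r) ⊆ Ω` and `|F| ≤ M_F` on `Ω`,
`‖u‖_{L^∞(B(x,r))} ≤ C (1 + r²|λ|)^{d+1} [(⨍_{B(x,2r)} |u|²)^{1/2} + r² M_F]`,
where `C` depends only on `d` and `q` (and the constant `C₁` in the hypothesis). -/
theorem stmt18 (d : ℕ) (hd : 1 ≤ d) (q : ℝ) (hq : 2 < q) (C₁ : ℝ) (hC₁ : 0 < C₁) :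
    ∃ C : ℝ, 0 < C ∧
    ∀ (Ω : Set (EuclideanSpace ℝ (Fin d))), IsOpen Ω → Bornology.IsBounded Ω →
    ∀ (lam : ℂ) (u F : Fin d → EuclideanSpace ℝ (Fin d) → ℂ) (MF : ℝ),
      -- F ∈ L^∞(Ω) with ‖F‖_{L^∞} ≤ MF
      (∀ x ∈ Ω, vnorm F x ≤ MF) →
      -- local square-integrability of u
      (∀ (x : EuclideanSpace ℝ (Fin d)) (r : ℝ), 0 < r → ball x (2 * r) ⊆ Ω →
        IntegrableOn (fun y => vnorm u y ^ 2) (ball x (2 * r))) →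
      -- hypothesis: interior Stokes regularity, L^{q₁} → L^{q₂} form
      (∀ (x : EuclideanSpace ℝ (Fin d)) (r : ℝ), 0 < r → ball x (2 * r) ⊆ Ω →
        ∀ q₁ q₂ : ℝ, 1 ≤ q₁ → q₁ < q₂ → 1 / q₂ = 1 / q₁ - 2 / d →
          (⨍ y in ball x r, vnorm u y ^ q₂) ^ (1 / q₂) ≤
            C₁ * ((⨍ y in ball x (2 * r), vnorm u y ^ 2) ^ ((1 : ℝ) / 2) +
              r ^ 2 * (⨍ y in ball x (2 * r),
                vnorm (fun i z => F i z - lam * u i z) y ^ q₁) ^ (1 / q₁))) →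
      -- hypothesis: its L^∞ endpoint at exponent q
      (∀ (x : EuclideanSpace ℝ (Fin d)) (r : ℝ), 0 < r → ball x (2 * r) ⊆ Ω →
        ∀ y ∈ ball x r, vnorm u y ≤
          C₁ * ((⨍ z in ball x (2 * r), vnorm u z ^ 2) ^ ((1 : ℝ) / 2) +
            r ^ 2 * (⨍ z in ball x (2 * r),
              vnorm (fun i w => F i w - lam * u i w) z ^ q) ^ (1 / q))) →
      -- conclusion
      ∀ (x : EuclideanSpace ℝ (Fin d)) (r : ℝ), 0 < r → ball x (2 * r) ⊆ Ω →
        ∀ y ∈ ball x r, vnorm u y ≤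
          C * (1 + r ^ 2 * ‖lam‖) ^ (d + 1) *
            ((⨍ z in ball x (2 * r), vnorm u z ^ 2) ^ ((1 : ℝ) / 2) + r ^ 2 * MF) := by
  classical
  have hq0 : (0:ℝ) < q := by linarith
  -- dimensional constants
  obtain ⟨α, hαval⟩ : ∃ c : ℝ, c = (2:ℝ) ^ ((d:ℝ)/2) := ⟨_, rfl⟩
  have hα1 : (1:ℝ) ≤ α := by rw [hαval]; exact Real.one_le_rpow one_le_two (by positivity)
  have hα0 : (0:ℝ) < α := by linarith
  obtain ⟨Cd, hCdval⟩ : ∃ c : ℝ, c = 64 * α * (C₁ + 1) := ⟨_, rfl⟩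
  have hCd64 : (64:ℝ) ≤ Cd := by rw [hCdval]; nlinarith
  have hCdpow0 : (0:ℝ) ≤ Cd ^ ((d:ℝ)/4) := Real.rpow_nonneg (by linarith) _
  refine ⟨2 * C₁ * (Cd ^ ((d:ℝ)/4) + 1), by positivity, ?_⟩
  intro Ω hΩopen hΩbd lam u F MF hF hInt _hBoot hEnd x r hr hball y hy
  obtain ⟨L, hLdef⟩ : ∃ c : ℝ, c = ‖lam‖ := ⟨_, rfl⟩
  rw [← hLdef]
  have hL0 : (0:ℝ) ≤ L := hLdef ▸ norm_nonneg _
  have hMF : 0 ≤ MF := le_trans (vnorm_nonneg' F x) (hF x (hball (mem_ball_self (by linarith))))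
  obtain ⟨V, hVdef⟩ : ∃ c : ℝ, c = ⨍ z in ball x (2 * r), vnorm u z ^ 2 := ⟨_, rfl⟩
  rw [← hVdef]
  have hV0 : 0 ≤ V := hVdef ▸ avg_nonneg' measurableSet_ball (fun z _ => by positivity)
  obtain ⟨sV, hsVdef⟩ : ∃ c : ℝ, c = V ^ ((1:ℝ)/2) := ⟨_, rfl⟩
  rw [← hsVdef]
  have hsV0 : 0 ≤ sV := hsVdef ▸ Real.rpow_nonneg hV0 _
  have hrL1 : (1:ℝ) ≤ 1 + r ^ 2 * L := by nlinarith [sq_nonneg r]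
  obtain ⟨W, hWval⟩ : ∃ c : ℝ, c = Cd * (1 + r ^ 2 * L) := ⟨_, rfl⟩
  have hW64 : (64:ℝ) ≤ W := by rw [hWval]; nlinarith
  have hW0 : (0:ℝ) < W := by linarith
  have hsqW8 : (8:ℝ) ≤ Real.sqrt W := by
    have h8 : (8:ℝ) = Real.sqrt 64 := by
      rw [show (64:ℝ) = 8 ^ 2 by norm_num, Real.sqrt_sq (by norm_num : (0:ℝ) ≤ 8)]
    rw [h8]
    exact Real.sqrt_le_sqrt hW64
  have hsqW0 : (0:ℝ) < Real.sqrt W := by linarith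
  obtain ⟨ρ0, hρ0def⟩ : ∃ c : ℝ, c = r / Real.sqrt W := ⟨_, rfl⟩
  have hρ0pos : 0 < ρ0 := hρ0def ▸ div_pos hr hsqW0
  have h8ρ0 : 8 * ρ0 ≤ r := by
    have h1 : r / Real.sqrt W ≤ r / 8 := by
      rw [div_le_div_iff₀ hsqW0 (by norm_num : (0:ℝ) < 8)]
      nlinarith
    rw [hρ0def]; linarith
  have hρ0r : ρ0 ≤ r := by linarith
  have hrρ0 : r / ρ0 = Real.sqrt W := by
    rw [hρ0def]; field_simp
  have hρ0sq : ρ0 ^ 2 = r ^ 2 / W := by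
    rw [hρ0def, div_pow, Real.sq_sqrt hW0.le]
  -- radii and shells
  obtain ⟨ρf, hρfdef⟩ : ∃ f : ℕ → ℝ, f = fun k => ρ0 / 2 ^ k := ⟨_, rfl⟩
  have hρfk : ∀ k, ρf k = ρ0 / 2 ^ k := fun k => by rw [hρfdef]
  have hρfpos : ∀ k, 0 < ρf k := fun k => by rw [hρfk]; positivity
  have hρfle : ∀ k, ρf k ≤ ρ0 := by
    intro k
    rw [hρfk]
    have h1 : (1:ℝ) ≤ 2 ^ k := one_le_pow₀ (by norm_num)
    rw [div_le_iff₀ (by positivity)]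
    nlinarith
  obtain ⟨tf, htfdef⟩ : ∃ f : ℕ → ℝ, f = fun k => r + 4 * ρ0 - 4 * (ρ0 / 2 ^ k) := ⟨_, rfl⟩
  have htfk : ∀ k, tf k = r + 4 * ρ0 - 4 * (ρ0 / 2 ^ k) := fun k => by rw [htfdef]
  have htf0 : tf 0 = r := by rw [htfk]; norm_num
  have htfs : ∀ k, tf (k + 1) = tf k + 2 * ρf k := by
    intro k
    rw [htfk, htfk, hρfk]
    rw [pow_succ, ← div_div]
    ring
  have htf32 : ∀ k, tf k ≤ 3 * r / 2 := by
    intro k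
    have h2 : 0 ≤ ρ0 / 2 ^ k := by positivity
    rw [htfk]
    linarith
  -- main and absorption coefficients
  obtain ⟨Ef, hEfdef⟩ : ∃ f : ℕ → ℝ, f = fun k =>
      C₁ * ((Real.sqrt W * 2 ^ k) ^ ((d:ℝ)/2) * sV + (ρ0 / 2 ^ k) ^ 2 * MF) := ⟨_, rfl⟩
  have hEfk : ∀ k, Ef k = C₁ * ((Real.sqrt W * 2 ^ k) ^ ((d:ℝ)/2) * sV + (ρ0 / 2 ^ k) ^ 2 * MF) :=
    fun k => by rw [hEfdef]
  obtain ⟨θf, hθfdef⟩ : ∃ f : ℕ → ℝ, f = fun k => C₁ * (ρ0 / 2 ^ k) ^ 2 * L := ⟨_, rfl⟩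
  have hθfk : ∀ k, θf k = C₁ * (ρ0 / 2 ^ k) ^ 2 * L := fun k => by rw [hθfdef]
  have hEf0 : ∀ k, 0 ≤ Ef k := by
    intro k
    rw [hEfk]
    have h1 : (0:ℝ) ≤ (Real.sqrt W * 2 ^ k) ^ ((d:ℝ)/2) := Real.rpow_nonneg (by positivity) _
    positivity
  have hθf0 : ∀ k, 0 ≤ θf k := by
    intro k; rw [hθfk]; positivity
  have hθfα : ∀ k, θf k * α ≤ 1 / 64 := by
    intro k
    have hρk2 : (ρ0 / 2 ^ k) ^ 2 ≤ ρ0 ^ 2 := by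
      have h1 : (1:ℝ) ≤ 2 ^ k := one_le_pow₀ (by norm_num)
      have h2 : ρ0 / 2 ^ k ≤ ρ0 := by
        rw [div_le_iff₀ (by positivity)]
        nlinarith
      have h3 : (0:ℝ) ≤ ρ0 / 2 ^ k := by positivity
      nlinarith
    have h2 : θf k ≤ C₁ * ρ0 ^ 2 * L := by
      rw [hθfk]
      exact mul_le_mul_of_nonneg_right (mul_le_mul_of_nonneg_left hρk2 hC₁.le) hL0
    have h3 : C₁ * ρ0 ^ 2 * L * α ≤ 1 / 64 := by
      rw [hρ0sq]
      have he : C₁ * (r ^ 2 / W) * L * α = C₁ * r ^ 2 * L * α / W := by ring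
      rw [he, div_le_iff₀ hW0, hWval, hCdval]
      nlinarith [sq_nonneg r, mul_nonneg (sq_nonneg r) hL0,
        mul_nonneg (mul_nonneg (sq_nonneg r) hL0) hα0.le]
    nlinarith [hθf0 k]
  have hθf12 : ∀ k, θf k ≤ 1 / 2 := by
    intro k
    have h := hθfα k
    nlinarith [hθf0 k, hα1]
  -- uniform bound on the big shell, by compactness
  obtain ⟨T, hT⟩ := (isCompact_closedBall x (3 * r / 2)).elim_finite_subcover
    (fun z : EuclideanSpace ℝ (Fin d) => ball z (r / 16)) (fun z => isOpen_ball)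
    (fun z _ => Set.mem_iUnion.2 ⟨z, mem_ball_self (by linarith)⟩)
  obtain ⟨M₀, hM₀⟩ := (T.image (fun z =>
    C₁ * ((⨍ w in ball z (2 * (r / 16)), vnorm u w ^ 2) ^ ((1:ℝ)/2) +
      (r / 16) ^ 2 * (⨍ w in ball z (2 * (r / 16)),
        vnorm (fun i w' => F i w' - lam * u i w') w ^ q) ^ (1 / q)))).exists_le
  obtain ⟨M', hM'def⟩ : ∃ c : ℝ, c = max M₀ 0 := ⟨_, rfl⟩
  have hM'0 : 0 ≤ M' := hM'def ▸ le_max_right _ _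
  have hM' : ∀ z ∈ closedBall x (3 * r / 2), vnorm u z ≤ M' := by
    intro z hz
    have hz' := hT hz
    rw [Set.mem_iUnion₂] at hz'
    obtain ⟨w, hwT, hzw⟩ := hz'
    have h1 : dist z w < r / 16 := mem_ball.1 hzw
    have h2 : dist z x ≤ 3 * r / 2 := mem_closedBall.1 hz
    have h3 : dist w x ≤ 27 * r / 16 := by
      have h4 := dist_triangle w z x
      rw [dist_comm w z] at h4
      linarith
    have hsubΩ : ball w (2 * (r / 16)) ⊆ Ω := by
      refine subset_trans (ball_subset_ball' ?_) hball
      linarith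
    have h := hEnd w (r / 16) (by linarith) hsubΩ z hzw
    rw [hM'def]
    exact h.trans (le_trans (hM₀ _ (Finset.mem_image_of_mem _ hwT)) (le_max_left _ _))
  -- one absorption step
  have hstep : ∀ (k : ℕ) (K : ℝ), 0 ≤ K →
      (∀ z ∈ closedBall x (tf (k + 1)), vnorm u z ≤ K) →
      ∀ y' ∈ closedBall x (tf k), vnorm u y' ≤ Ef k + θf k * K := by
    intro k K hK hKb y' hy'
    have hρk := hρfpos k
    have hsub1 : ball y' (2 * ρf k) ⊆ ball x (tf (k + 1)) := by
      refine ball_subset_ball' ?_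
      have h1 := mem_closedBall.1 hy'
      rw [htfs k]; linarith
    have hsub2 : ball x (tf (k + 1)) ⊆ ball x (2 * r) := by
      refine ball_subset_ball ?_
      have h5 := htf32 (k + 1)
      linarith
    have hsubΩ : ball y' (2 * ρf k) ⊆ Ω := (hsub1.trans hsub2).trans hball
    have h := hEnd y' (ρf k) hρk hsubΩ y' (mem_ball_self hρk)
    have hrk : r / ρf k = Real.sqrt W * 2 ^ k := by
      rw [hρfk, div_div_eq_mul_div, ← div_mul_eq_mul_div, hrρ0]
    have havg2 : ⨍ z in ball y' (2 * ρf k), vnorm u z ^ 2 ≤ (Real.sqrt W * 2 ^ k) ^ d * V := by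
      have h0 := avg_ball_le x y' (by positivity : (0:ℝ) < 2 * ρf k)
        (by linarith : (0:ℝ) < 2 * r) (hsub1.trans hsub2) (hInt x r hr hball)
        (fun z => by positivity)
      have he : (2 * r) / (2 * ρf k) = r / ρf k := by
        rw [mul_div_mul_left _ _ (two_ne_zero)]
      rw [he, hrk, ← hVdef] at h0
      exact h0
    have hA : (⨍ z in ball y' (2 * ρf k), vnorm u z ^ 2) ^ ((1:ℝ)/2)
        ≤ (Real.sqrt W * 2 ^ k) ^ ((d:ℝ)/2) * sV := by
      have h1 : (⨍ z in ball y' (2 * ρf k), vnorm u z ^ 2) ^ ((1:ℝ)/2)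
          ≤ ((Real.sqrt W * 2 ^ k) ^ d * V) ^ ((1:ℝ)/2) :=
        Real.rpow_le_rpow (avg_nonneg' measurableSet_ball (fun z _ => by positivity)) havg2
          (by norm_num)
      refine h1.trans_eq ?_
      rw [Real.mul_rpow (by positivity) hV0, hsVdef]
      congr 1
      rw [← Real.rpow_natCast (Real.sqrt W * 2 ^ k) d, ← Real.rpow_mul (by positivity)]
      congr 1
      ring
    have hBpt : ∀ z ∈ ball y' (2 * ρf k),
        vnorm (fun i w => F i w - lam * u i w) z ^ q ≤ (MF + L * K) ^ q := by
      intro z hz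
      have h1 : vnorm (fun i w => F i w - lam * u i w) z ≤ MF + L * K := by
        refine (vnorm_sub_le F u lam z).trans ?_
        have h2 : vnorm F z ≤ MF := hF z (hsubΩ hz)
        have h3 : vnorm u z ≤ K := hKb z (ball_subset_closedBall (hsub1 hz))
        rw [hLdef]
        nlinarith [vnorm_nonneg' u z, norm_nonneg lam, hLdef ▸ hL0]
      exact Real.rpow_le_rpow (vnorm_nonneg' _ _) h1 hq0.le
    have hB : (⨍ z in ball y' (2 * ρf k),
        vnorm (fun i w => F i w - lam * u i w) z ^ q) ^ (1/q) ≤ MF + L * K := by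
      have h1 : ⨍ z in ball y' (2 * ρf k), vnorm (fun i w => F i w - lam * u i w) z ^ q
          ≤ (MF + L * K) ^ q :=
        avg_le_const measurableSet_ball measure_ball_lt_top.ne
          (Real.rpow_nonneg (by positivity) _) hBpt
      have h2 := Real.rpow_le_rpow
        (avg_nonneg' measurableSet_ball
          (fun z _ => Real.rpow_nonneg (vnorm_nonneg' _ _) _)) h1
        (by positivity : (0:ℝ) ≤ 1 / q)
      refine h2.trans_eq ?_
      rw [← Real.rpow_mul (by positivity : (0:ℝ) ≤ MF + L * K),
        mul_one_div_cancel hq0.ne', Real.rpow_one]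
    refine h.trans ?_
    have hcomb : (⨍ z in ball y' (2 * ρf k), vnorm u z ^ 2) ^ ((1:ℝ)/2)
          + ρf k ^ 2 * (⨍ z in ball y' (2 * ρf k),
              vnorm (fun i w => F i w - lam * u i w) z ^ q) ^ (1/q)
        ≤ (Real.sqrt W * 2 ^ k) ^ ((d:ℝ)/2) * sV + ρf k ^ 2 * (MF + L * K) := by
      have h5 : (0:ℝ) ≤ ρf k ^ 2 := sq_nonneg _
      have h6 := mul_le_mul_of_nonneg_left hB h5
      linarith [hA]
    calc C₁ * ((⨍ z in ball y' (2 * ρf k), vnorm u z ^ 2) ^ ((1:ℝ)/2)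
          + ρf k ^ 2 * (⨍ z in ball y' (2 * ρf k),
              vnorm (fun i w => F i w - lam * u i w) z ^ q) ^ (1/q))
        ≤ C₁ * ((Real.sqrt W * 2 ^ k) ^ ((d:ℝ)/2) * sV + ρf k ^ 2 * (MF + L * K)) :=
          mul_le_mul_of_nonneg_left hcomb hC₁.le
      _ = Ef k + θf k * K := by rw [hEfk, hθfk, hρfk]; ring
  -- iterate
  have habsG0 : ∀ N k, 0 ≤ absG Ef θf M' N k := absG_nonneg Ef θf M' hM'0 hEf0 hθf0
  have hind : ∀ N k, ∀ z ∈ closedBall x (tf k), vnorm u z ≤ absG Ef θf M' N k :=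
    shell_bound (fun k => closedBall x (tf k)) (vnorm u) Ef θf M'
      (fun k z hz => hM' z (closedBall_subset_closedBall (htf32 k) hz)) habsG0 hstep
  -- invariant
  obtain ⟨R', hR'def⟩ : ∃ c : ℝ, c = W ^ ((d:ℝ)/4) := ⟨_, rfl⟩
  have hR'0 : 0 ≤ R' := hR'def ▸ Real.rpow_nonneg hW0.le _
  have hWα : ∀ k : ℕ, (Real.sqrt W * 2 ^ k) ^ ((d:ℝ)/2) = R' * α ^ k := by
    intro k
    rw [Real.mul_rpow (Real.sqrt_nonneg _) (by positivity)]
    congr 1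
    · rw [hR'def, Real.sqrt_eq_rpow, ← Real.rpow_mul hW0.le]
      congr 1
      ring
    · rw [hαval, ← Real.rpow_natCast (2:ℝ) k, ← Real.rpow_mul (by norm_num : (0:ℝ) ≤ 2),
        ← Real.rpow_natCast ((2:ℝ) ^ ((d:ℝ)/2)) k, ← Real.rpow_mul (by norm_num : (0:ℝ) ≤ 2)]
      congr 1
      ring
  obtain ⟨P, hPdef⟩ : ∃ c : ℝ, c = 2 * C₁ * R' * sV := ⟨_, rfl⟩
  obtain ⟨Q', hQdef⟩ : ∃ c : ℝ, c = 2 * C₁ * ρ0 ^ 2 * MF := ⟨_, rfl⟩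
  have hP0 : 0 ≤ P := by rw [hPdef]; positivity
  have hQ0 : 0 ≤ Q' := by rw [hQdef]; positivity
  have hEle : ∀ k, Ef k ≤ P / 2 * α ^ k + Q' / 2 := by
    intro k
    rw [hEfk, hWα k, hPdef, hQdef]
    have h1 : (ρ0 / 2 ^ k) ^ 2 ≤ ρ0 ^ 2 := by
      have ha : (1:ℝ) ≤ 2 ^ k := one_le_pow₀ (by norm_num)
      have hb : ρ0 / 2 ^ k ≤ ρ0 := by
        rw [div_le_iff₀ (by positivity)]
        nlinarith
      have hc : (0:ℝ) ≤ ρ0 / 2 ^ k := by positivity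
      nlinarith
    have h2 : C₁ * ((ρ0 / 2 ^ k) ^ 2 * MF) ≤ C₁ * (ρ0 ^ 2 * MF) :=
      mul_le_mul_of_nonneg_left (mul_le_mul_of_nonneg_right h1 hMF) hC₁.le
    calc C₁ * (R' * α ^ k * sV + (ρ0 / 2 ^ k) ^ 2 * MF)
        = C₁ * (R' * α ^ k * sV) + C₁ * ((ρ0 / 2 ^ k) ^ 2 * MF) := by ring
      _ ≤ C₁ * (R' * α ^ k * sV) + C₁ * (ρ0 ^ 2 * MF) := by linarith
      _ = 2 * C₁ * R' * sV / 2 * α ^ k + 2 * C₁ * ρ0 ^ 2 * MF / 2 := by ring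
  have hinv : ∀ N k, absG Ef θf M' N k ≤ P * α ^ k + Q' + (1/2:ℝ) ^ N * M' :=
    absG_le Ef θf M' P Q' α hM'0 hEle hθf0
      (fun k => le_trans (hθfα k) (by norm_num)) hθf12 hP0 hQ0 hα0
  -- pass to the limit
  have hy0 : y ∈ closedBall x (tf 0) := by rw [htf0]; exact ball_subset_closedBall hy
  have hfin : ∀ N : ℕ, vnorm u y ≤ P + Q' + (1/2:ℝ) ^ N * M' := by
    intro N
    have h1 := (hind N 0 y hy0).trans (hinv N 0)
    simpa using h1
  have hlim : vnorm u y ≤ P + Q' := by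
    have h0 : Filter.Tendsto (fun N : ℕ => P + Q' + (1/2:ℝ) ^ N * M') Filter.atTop
        (nhds (P + Q' + 0 * M')) :=
      tendsto_const_nhds.add ((tendsto_pow_atTop_nhds_zero_of_lt_one (by norm_num)
        (by norm_num)).mul_const M')
    have h1 := ge_of_tendsto' h0 hfin
    linarith
  -- final arithmetic
  have hX1 : (1:ℝ) ≤ (1 + r ^ 2 * L) ^ (d + 1) := one_le_pow₀ hrL1
  have hX0 : (0:ℝ) ≤ (1 + r ^ 2 * L) ^ (d + 1) := by linarith
  have hRle : R' ≤ Cd ^ ((d:ℝ)/4) * (1 + r ^ 2 * L) ^ (d + 1) := by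
    rw [hR'def, hWval, Real.mul_rpow (by linarith : (0:ℝ) ≤ Cd) (by linarith)]
    refine mul_le_mul_of_nonneg_left ?_ hCdpow0
    rw [← Real.rpow_natCast (1 + r ^ 2 * L) (d + 1)]
    refine Real.rpow_le_rpow_of_exponent_le hrL1 ?_
    have hd0 : (0:ℝ) ≤ (d:ℝ) := Nat.cast_nonneg d
    push_cast
    linarith
  have hρ0r2 : ρ0 ^ 2 ≤ r ^ 2 := pow_le_pow_left₀ hρ0pos.le hρ0r 2
  have hfinal : P + Q' ≤ 2 * C₁ * (Cd ^ ((d:ℝ)/4) + 1) * (1 + r ^ 2 * L) ^ (d + 1)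
      * (sV + r ^ 2 * MF) := by
    have h1 : P ≤ 2 * C₁ * (Cd ^ ((d:ℝ)/4) * (1 + r ^ 2 * L) ^ (d + 1)) * sV := by
      rw [hPdef]
      exact mul_le_mul_of_nonneg_right
        (mul_le_mul_of_nonneg_left hRle (by positivity : (0:ℝ) ≤ 2 * C₁)) hsV0
    have h2 : Q' ≤ 2 * C₁ * (r ^ 2 * MF) := by
      calc Q' = 2 * C₁ * (ρ0 ^ 2 * MF) := by rw [hQdef]; ring
        _ ≤ 2 * C₁ * (r ^ 2 * MF) :=
          mul_le_mul_of_nonneg_left (mul_le_mul_of_nonneg_right hρ0r2 hMF)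
            (by positivity : (0:ℝ) ≤ 2 * C₁)
    have h3 : (0:ℝ) ≤ r ^ 2 * MF := by positivity
    have hax : Cd ^ ((d:ℝ)/4) * (1 + r ^ 2 * L) ^ (d + 1)
        ≤ (Cd ^ ((d:ℝ)/4) + 1) * (1 + r ^ 2 * L) ^ (d + 1) :=
      mul_le_mul_of_nonneg_right (by linarith) hX0
    have haX1 : (1:ℝ) ≤ (Cd ^ ((d:ℝ)/4) + 1) * (1 + r ^ 2 * L) ^ (d + 1) := by
      calc (1:ℝ) = 1 * 1 := by norm_num
        _ ≤ (Cd ^ ((d:ℝ)/4) + 1) * (1 + r ^ 2 * L) ^ (d + 1) :=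
          mul_le_mul (by linarith) hX1 (by norm_num) (by linarith)
    have e1 : 2 * C₁ * (Cd ^ ((d:ℝ)/4) * (1 + r ^ 2 * L) ^ (d + 1)) * sV
        ≤ 2 * C₁ * ((Cd ^ ((d:ℝ)/4) + 1) * (1 + r ^ 2 * L) ^ (d + 1)) * sV :=
      mul_le_mul_of_nonneg_right
        (mul_le_mul_of_nonneg_left hax (by positivity : (0:ℝ) ≤ 2 * C₁)) hsV0
    have h5 : 2 * C₁ * 1 ≤ 2 * C₁ * ((Cd ^ ((d:ℝ)/4) + 1) * (1 + r ^ 2 * L) ^ (d + 1)) :=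
      mul_le_mul_of_nonneg_left haX1 (by positivity : (0:ℝ) ≤ 2 * C₁)
    have h6 : 2 * C₁ ≤ 2 * C₁ * ((Cd ^ ((d:ℝ)/4) + 1) * (1 + r ^ 2 * L) ^ (d + 1)) := by
      linarith
    have e2 : 2 * C₁ * (r ^ 2 * MF)
        ≤ 2 * C₁ * ((Cd ^ ((d:ℝ)/4) + 1) * (1 + r ^ 2 * L) ^ (d + 1)) * (r ^ 2 * MF) :=
      mul_le_mul_of_nonneg_right h6 h3
    calc P + Q' ≤ 2 * C₁ * (Cd ^ ((d:ℝ)/4) * (1 + r ^ 2 * L) ^ (d + 1)) * sV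
          + 2 * C₁ * (r ^ 2 * MF) := add_le_add h1 h2
      _ ≤ 2 * C₁ * ((Cd ^ ((d:ℝ)/4) + 1) * (1 + r ^ 2 * L) ^ (d + 1)) * sV
          + 2 * C₁ * ((Cd ^ ((d:ℝ)/4) + 1) * (1 + r ^ 2 * L) ^ (d + 1)) * (r ^ 2 * MF) :=
        add_le_add e1 e2
      _ = 2 * C₁ * (Cd ^ ((d:ℝ)/4) + 1) * (1 + r ^ 2 * L) ^ (d + 1) * (sV + r ^ 2 * MF) := by
        ring
  calc vnorm u y ≤ P + Q' := hlim
    _ ≤ 2 * C₁ * (Cd ^ ((d:ℝ)/4) + 1) * (1 + r ^ 2 * L) ^ (d + 1) * (sV + r ^ 2 * MF) := hfinal
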